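/- Let (L, δ) be a Leibniz coalgebra over k and let (X, ρ_X) and (Y, ρ_Y) be right L-comodules. Define ρ_{X⊗Y} : X ⊗ Y → (X ⊗ Y) ⊗ L by ρ_{X⊗Y}(x ⊗ y) = Σ (x_{[0]} ⊗ y) ⊗ x_{[1]} + Σ (x ⊗ y_{[0]}) ⊗ y_{[1]}, where ρ_X(x) = Σ x_{[0]} ⊗ x_{[1]} and ρ_Y(y) = Σ y_{[0]} ⊗ y_{[1]}. Then (X ⊗ Y, ρ_{X⊗Y}) is a right L-comodule, i.e. ρ_{X⊗Y} satisfies the same comodule identity. -/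
import Mathlib


open TensorProduct

namespace LeibnizAux


variable {k : Type} [Field k] {L X Y T : Type}
  [AddCommGroup L] [Module k L] [AddCommGroup X] [Module k X]
  [AddCommGroup Y] [Module k Y] [AddCommGroup T] [Module k T]

lemma aux1 (x : X) (b : Y ⊗[k] L) :
    (TensorProduct.assoc k X Y L).symm (x ⊗ₜ[k] b)
      = LinearMap.rTensor L (TensorProduct.mk k X Y x) b := by
  induction b using TensorProduct.induction_on with
  | zero => simp
  | tmul y l => simp
  | add u v hu hv => simp [tmul_add, hu, hv]

lemma aux2 (y : Y) (a : X ⊗[k] L) :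
    (TensorProduct.assoc k X Y L).symm
        ((TensorProduct.map LinearMap.id (TensorProduct.comm k L Y).toLinearMap)
          ((TensorProduct.assoc k X L Y) (a ⊗ₜ[k] y)))
      = LinearMap.rTensor L ((TensorProduct.mk k X Y).flip y) a := by
  induction a using TensorProduct.induction_on with
  | zero => simp
  | tmul x l => simp
  | add u v hu hv => simp only [add_tmul, map_add, hu, hv]

lemma aux_swap_invol (e : T ⊗[k] (L ⊗[k] L)) :
    (TensorProduct.map LinearMap.id (TensorProduct.comm k L L).toLinearMap)
      ((TensorProduct.map LinearMap.id (TensorProduct.comm k L L).toLinearMap) e) = e := by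
  induction e using TensorProduct.induction_on with
  | zero => simp
  | tmul t u =>
    induction u using TensorProduct.induction_on with
    | zero => simp
    | tmul l l' => simp
    | add u v hu hv => simp only [tmul_add, map_add, hu, hv]
  | add u v hu hv => simp [hu, hv]

lemma auxB4 (f : X →ₗ[k] T) (d : L →ₗ[k] L ⊗[k] L) (a : X ⊗[k] L) :
    TensorProduct.map LinearMap.id d (LinearMap.rTensor L f a)
      = LinearMap.rTensor (L ⊗[k] L) f (TensorProduct.map LinearMap.id d a) := by
  induction a using TensorProduct.induction_on with
  | zero => simp
  | tmul x l => simp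
  | add u v hu hv => simp [hu, hv]

lemma auxK1a (f : X →ₗ[k] T) (c : (X ⊗[k] L) ⊗[k] L) :
    TensorProduct.assoc k T L L (LinearMap.rTensor L (LinearMap.rTensor L f) c)
      = LinearMap.rTensor (L ⊗[k] L) f (TensorProduct.assoc k X L L c) := by
  induction c using TensorProduct.induction_on with
  | zero => simp
  | tmul u l =>
    induction u using TensorProduct.induction_on with
    | zero => simp
    | tmul x l' => simp
    | add u v hu hv => simp only [add_tmul, map_add, hu, hv]
  | add u v hu hv => simp [hu, hv]

lemma auxK1b (f : X →ₗ[k] T) (e : X ⊗[k] (L ⊗[k] L)) :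
    TensorProduct.map LinearMap.id (TensorProduct.comm k L L).toLinearMap
        (LinearMap.rTensor (L ⊗[k] L) f e)
      = LinearMap.rTensor (L ⊗[k] L) f
          (TensorProduct.map LinearMap.id (TensorProduct.comm k L L).toLinearMap e) := by
  induction e using TensorProduct.induction_on with
  | zero => simp
  | tmul x u => simp
  | add u v hu hv => simp [hu, hv]

lemma auxK3 (a : X ⊗[k] L) (b : Y ⊗[k] L) :
    TensorProduct.assoc k (X ⊗[k] Y) L L
        (LinearMap.rTensor L
          ((TensorProduct.assoc k X Y L).symm.toLinearMap ∘ₗ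
            (TensorProduct.mk k X (Y ⊗[k] L)).flip b) a)
      = TensorProduct.map LinearMap.id (TensorProduct.comm k L L).toLinearMap
          (TensorProduct.assoc k (X ⊗[k] Y) L L
            (LinearMap.rTensor L
              (((TensorProduct.assoc k X Y L).symm.toLinearMap ∘ₗ
                  (TensorProduct.map LinearMap.id (TensorProduct.comm k L Y).toLinearMap) ∘ₗ
                  (TensorProduct.assoc k X L Y).toLinearMap) ∘ₗ
                TensorProduct.mk k (X ⊗[k] L) Y a) b)) := by
  induction a using TensorProduct.induction_on with
  | zero => simp
  | tmul x l =>
    induction b using TensorProduct.induction_on with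
    | zero => simp
    | tmul y l' => simp
    | add u v hu hv =>
      simp only [LinearMap.rTensor_tmul, LinearMap.coe_comp, Function.comp_apply,
        LinearEquiv.coe_coe, LinearMap.flip_apply, mk_apply, LinearMap.add_apply,
        LinearMap.comp_add, map_add, tmul_add, add_tmul] at hu hv ⊢
      rw [hu, hv]
  | add u v hu hv =>
    simp only [map_add, LinearMap.comp_add, LinearMap.rTensor_add, LinearMap.add_apply,
      add_tmul, tmul_add] at hu hv ⊢
    rw [hu, hv]

end LeibnizAux

open LeibnizAux

/-- The right comodule condition over a Leibniz coalgebra `(L, δ)`: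
`(ρ ⊗ id) ∘ ρ - (id ⊗ τ) ∘ (ρ ⊗ id) ∘ ρ = (id ⊗ δ) ∘ ρ`. -/
def IsLeibnizComodule (k : Type) [Field k] {L X : Type}
    [AddCommGroup L] [Module k L] [AddCommGroup X] [Module k X]
    (δ : L →ₗ[k] L ⊗[k] L) (ρ : X →ₗ[k] X ⊗[k] L) : Prop :=
  (TensorProduct.assoc k X L L).toLinearMap ∘ₗ (TensorProduct.map ρ LinearMap.id) ∘ₗ ρ
    - (TensorProduct.map LinearMap.id (TensorProduct.comm k L L).toLinearMap) ∘ₗ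
        (TensorProduct.assoc k X L L).toLinearMap ∘ₗ
        (TensorProduct.map ρ LinearMap.id) ∘ₗ ρ
  = (TensorProduct.map LinearMap.id δ) ∘ₗ ρ

/-- If `X` and `Y` are right comodules over a Leibniz coalgebra `(L, δ)`, then
`ρ_{X⊗Y}(x ⊗ y) = (x_{[0]} ⊗ y) ⊗ x_{[1]} + (x ⊗ y_{[0]}) ⊗ y_{[1]}` makes `X ⊗ Y`
a right `L`-comodule. -/
theorem statement (k : Type) [Field k] [CharZero k]
    (L : Type) [AddCommGroup L] [Module k L]
    (δ : L →ₗ[k] L ⊗[k] L)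
    (hLeib : IsLeibnizComodule k δ δ)
    (X : Type) [AddCommGroup X] [Module k X]
    (Y : Type) [AddCommGroup Y] [Module k Y]
    (ρX : X →ₗ[k] X ⊗[k] L) (hX : IsLeibnizComodule k δ ρX)
    (ρY : Y →ₗ[k] Y ⊗[k] L) (hY : IsLeibnizComodule k δ ρY) :
    IsLeibnizComodule k δ
      (((TensorProduct.assoc k X Y L).symm.toLinearMap ∘ₗ
          (TensorProduct.map LinearMap.id (TensorProduct.comm k L Y).toLinearMap) ∘ₗ
          (TensorProduct.assoc k X L Y).toLinearMap ∘ₗ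
          (TensorProduct.map ρX LinearMap.id))
        + ((TensorProduct.assoc k X Y L).symm.toLinearMap ∘ₗ
            (TensorProduct.map LinearMap.id ρY))) := by
  unfold IsLeibnizComodule at hX hY ⊢
  set ρ : (X ⊗[k] Y) →ₗ[k] (X ⊗[k] Y) ⊗[k] L :=
    (((TensorProduct.assoc k X Y L).symm.toLinearMap ∘ₗ
          (TensorProduct.map LinearMap.id (TensorProduct.comm k L Y).toLinearMap) ∘ₗ
          (TensorProduct.assoc k X L Y).toLinearMap ∘ₗ
          (TensorProduct.map ρX LinearMap.id))
        + ((TensorProduct.assoc k X Y L).symm.toLinearMap ∘ₗ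
            (TensorProduct.map LinearMap.id ρY))) with hρdef
  have hρ : ∀ (x : X) (y : Y),
      ρ (x ⊗ₜ[k] y)
        = LinearMap.rTensor L ((TensorProduct.mk k X Y).flip y) (ρX x)
          + LinearMap.rTensor L (TensorProduct.mk k X Y x) (ρY y) := by
    intro x y
    rw [hρdef]
    simp only [LinearMap.add_apply, LinearMap.coe_comp, Function.comp_apply,
      LinearEquiv.coe_coe, TensorProduct.map_tmul, LinearMap.id_coe, id_eq]
    rw [aux1, aux2]
  apply TensorProduct.ext'
  intro x y
  have hx := LinearMap.congr_fun hX x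
  have hy := LinearMap.congr_fun hY y
  simp only [LinearMap.sub_apply, LinearMap.coe_comp, Function.comp_apply,
    LinearEquiv.coe_coe] at hx hy ⊢
  have hB2 : ∀ a : X ⊗[k] L,
      (TensorProduct.map ρ LinearMap.id)
          (LinearMap.rTensor L ((TensorProduct.mk k X Y).flip y) a)
        = LinearMap.rTensor L (LinearMap.rTensor L ((TensorProduct.mk k X Y).flip y))
            ((TensorProduct.map ρX LinearMap.id) a)
          + LinearMap.rTensor L ((TensorProduct.assoc k X Y L).symm.toLinearMap ∘ₗ
              (TensorProduct.mk k X (Y ⊗[k] L)).flip (ρY y)) a := by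
    intro a
    induction a using TensorProduct.induction_on with
    | zero => simp
    | tmul x0 x1 =>
      simp only [LinearMap.rTensor_tmul, TensorProduct.map_tmul, LinearMap.id_coe, id_eq,
        LinearMap.coe_comp, Function.comp_apply, LinearMap.flip_apply, TensorProduct.mk_apply,
        LinearEquiv.coe_coe, hρ, aux1, add_tmul]
    | add u v hu hv => simp only [map_add, hu, hv]; abel
  have hB3 : ∀ b : Y ⊗[k] L,
      (TensorProduct.map ρ LinearMap.id)
          (LinearMap.rTensor L (TensorProduct.mk k X Y x) b)
        = LinearMap.rTensor L (LinearMap.rTensor L (TensorProduct.mk k X Y x))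
            ((TensorProduct.map ρY LinearMap.id) b)
          + LinearMap.rTensor L
              (((TensorProduct.assoc k X Y L).symm.toLinearMap ∘ₗ
                (TensorProduct.map LinearMap.id (TensorProduct.comm k L Y).toLinearMap) ∘ₗ
                (TensorProduct.assoc k X L Y).toLinearMap) ∘ₗ
                TensorProduct.mk k (X ⊗[k] L) Y (ρX x)) b := by
    intro b
    induction b using TensorProduct.induction_on with
    | zero => simp
    | tmul y0 y1 =>
      simp only [LinearMap.rTensor_tmul, TensorProduct.map_tmul, LinearMap.id_coe, id_eq,
        LinearMap.coe_comp, Function.comp_apply, LinearMap.flip_apply, TensorProduct.mk_apply,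
        LinearEquiv.coe_coe, hρ, aux2, add_tmul]
      abel
    | add u v hu hv => simp only [map_add, hu, hv]; abel
  rw [hρ x y, map_add, hB2, hB3]
  simp only [map_add]
  rw [auxK1a, auxK1a, auxK3 (ρX x) (ρY y)]
  rw [aux_swap_invol, auxK1b, auxK1b, auxB4, auxB4, ← hx, ← hy]
  simp only [map_sub]
  abel
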